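/- Let (X, d) be a metric space with a Borel measure μ, let x ∈ X, and suppose there is a constant D > 0 with μ(B(x,2s)) ≤ D·μ(B(x,s)) for all s > 0, and that 0 < μ(B(x,s)) < ∞ for all s > 0. Let f : X → ℝ be measurable with 0 ≤ f ≤ M for a constant M > 0, and set k(x,s) = (1/μ(B(x,s))) ∫_{B(x,s)} f dμ. Suppose there is a constant C > 0 such that ∫_0^r s·k(x,s) ds ≤ C·log(2+r) for all r > 0. Then for every ε ∈ (0,1) there exists a constant C' > 0 such that k(x,r) ≤ C'/(1+r)^{1+ε} for all r > 0. -/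

import Mathlib

open MeasureTheory Metric Set

/-- Let `(X, d)` be a metric space with a Borel measure `μ`, `x ∈ X`, doubling at `x`
(`μ(B(x,2s)) ≤ D·μ(B(x,s))`), with `0 < μ(B(x,s)) < ∞` for all `s > 0`. Let `f` be
measurable with `0 ≤ f ≤ M`, `k(x,s)` the average of `f` over `B(x,s)`, and suppose
`∫_0^r s·k(x,s) ds ≤ C·log(2+r)` for all `r > 0`. Then for every `ε ∈ (0,1)` there is
`C' > 0` with `k(x,r) ≤ C'/(1+r)^{1+ε}` for all `r > 0`. -/
theorem average_decay_of_log_integral_bound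
    {X : Type*} [MetricSpace X] [MeasurableSpace X] [BorelSpace X]
    (μ : Measure X) (x : X)
    (D : ℝ) (hD : 0 < D)
    (hdoub : ∀ s : ℝ, 0 < s → μ (Metric.ball x (2 * s)) ≤ ENNReal.ofReal D * μ (Metric.ball x s))
    (hvol : ∀ s : ℝ, 0 < s → 0 < μ (Metric.ball x s) ∧ μ (Metric.ball x s) < ⊤)
    (f : X → ℝ) (hf_meas : Measurable f)
    (M : ℝ) (hM : 0 < M) (hf_bd : ∀ y, 0 ≤ f y ∧ f y ≤ M)
    (k : ℝ → ℝ)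
    (hk : ∀ s, k s = ((μ (Metric.ball x s)).toReal)⁻¹ * ∫ y in Metric.ball x s, f y ∂μ)
    (C : ℝ) (hC : 0 < C)
    (hint : ∀ r : ℝ, 0 < r → ∫ s in Set.Ioo (0 : ℝ) r, s * k s ≤ C * Real.log (2 + r)) :
    ∀ ε ∈ Set.Ioo (0 : ℝ) 1, ∃ C' : ℝ, 0 < C' ∧
      ∀ r : ℝ, 0 < r → k r ≤ C' / (1 + r) ^ (1 + ε) := by
  -- basic facts
  have hμfin : ∀ s : ℝ, μ (Metric.ball x s) ≠ ⊤ := by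
    intro s
    rcases le_or_gt s 0 with h | h
    · rw [Metric.ball_eq_empty.2 h]; simp
    · exact (hvol s h).2.ne
  have hfint : ∀ s : ℝ, IntegrableOn f (Metric.ball x s) μ := by
    intro s
    refine Measure.integrableOn_of_bounded (M := M) (hμfin s) hf_meas.aestronglyMeasurable ?_
    filter_upwards with y
    rw [Real.norm_eq_abs, abs_le]
    exact ⟨by linarith [(hf_bd y).1], (hf_bd y).2⟩
  have hint_nonneg : ∀ s : ℝ, 0 ≤ ∫ y in Metric.ball x s, f y ∂μ := fun s =>
    setIntegral_nonneg measurableSet_ball (fun y _ => (hf_bd y).1)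
  have hk_nonneg : ∀ s, 0 ≤ k s := by
    intro s; rw [hk s]
    exact mul_nonneg (inv_nonneg.2 ENNReal.toReal_nonneg) (hint_nonneg s)
  have htoRealpos : ∀ s : ℝ, 0 < s → 0 < (μ (Metric.ball x s)).toReal := by
    intro s hs
    exact ENNReal.toReal_pos (hvol s hs).1.ne' (hμfin s)
  have hk_le_M : ∀ s, k s ≤ M := by
    intro s; rw [hk s]
    rcases le_or_gt s 0 with h | h
    · rw [Metric.ball_eq_empty.2 h]; simp [hM.le]
    · have h1 : ∫ y in Metric.ball x s, f y ∂μ ≤ M * (μ (Metric.ball x s)).toReal := by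
        have := setIntegral_mono_on (hfint s) (integrableOn_const (hvol s h).2.ne)
          measurableSet_ball (fun y _ => (hf_bd y).2)
        simpa [mul_comm, measureReal_def] using this
      rw [inv_mul_le_iff₀ (htoRealpos s h)]
      linarith [h1]
  -- monotonicity of the two building blocks
  have mono1 : Monotone (fun s : ℝ => (μ (Metric.ball x s)).toReal) := by
    intro s t hst
    exact ENNReal.toReal_mono (hμfin t) (measure_mono (Metric.ball_subset_ball hst))
  have mono2 : Monotone (fun s : ℝ => ∫ y in Metric.ball x s, f y ∂μ) := by
    intro s t hst
    refine setIntegral_mono_set (hfint t) ?_ (HasSubset.Subset.eventuallyLE (Metric.ball_subset_ball hst))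
    filter_upwards with y using (hf_bd y).1
  have hk_meas : Measurable k := by
    have : k = fun s => ((fun s : ℝ => (μ (Metric.ball x s)).toReal) s)⁻¹ *
        (fun s : ℝ => ∫ y in Metric.ball x s, f y ∂μ) s := funext hk
    rw [this]
    exact (mono1.measurable.inv).mul mono2.measurable
  -- almost-monotonicity of k via doubling
  have hkmono : ∀ r s : ℝ, 0 < r → r ≤ s → s ≤ 2 * r → k r ≤ D * k s := by
    intro r s hr hrs hs2r
    have hs : 0 < s := lt_of_lt_of_le hr hrs
    have hμle : (μ (Metric.ball x s)).toReal ≤ D * (μ (Metric.ball x r)).toReal := by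
      have h1 : μ (Metric.ball x s) ≤ ENNReal.ofReal D * μ (Metric.ball x r) :=
        le_trans (measure_mono (Metric.ball_subset_ball hs2r)) (hdoub r hr)
      have h2 : (ENNReal.ofReal D * μ (Metric.ball x r)).toReal
          = D * (μ (Metric.ball x r)).toReal := by
        rw [ENNReal.toReal_mul, ENNReal.toReal_ofReal hD.le]
      calc (μ (Metric.ball x s)).toReal
          ≤ (ENNReal.ofReal D * μ (Metric.ball x r)).toReal :=
            ENNReal.toReal_mono (ENNReal.mul_ne_top ENNReal.ofReal_ne_top (hμfin r)) h1
        _ = D * (μ (Metric.ball x r)).toReal := h2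
    have hIle : ∫ y in Metric.ball x r, f y ∂μ ≤ ∫ y in Metric.ball x s, f y ∂μ := mono2 hrs
    rw [hk r, hk s]
    have har : 0 < (μ (Metric.ball x r)).toReal := htoRealpos r hr
    have has : 0 < (μ (Metric.ball x s)).toReal := htoRealpos s hs
    rw [inv_mul_le_iff₀ har]
    set a := (μ (Metric.ball x r)).toReal
    set b := (μ (Metric.ball x s)).toReal
    set Is := ∫ y in Metric.ball x s, f y ∂μ
    have key : Is ≤ D * (b⁻¹ * Is) * a := by
      calc Is = (b⁻¹ * Is) * b := by field_simp
        _ ≤ (b⁻¹ * Is) * (D * a) :=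
            mul_le_mul_of_nonneg_left hμle (mul_nonneg (inv_nonneg.2 has.le) (hint_nonneg s))
        _ = D * (b⁻¹ * Is) * a := by ring
    linarith
  -- key estimate: k r * (3 r² / 2) ≤ D C log(2+2r)
  have hkey : ∀ r : ℝ, 0 < r → k r * (3 * r ^ 2 / 2) ≤ D * (C * Real.log (2 + 2 * r)) := by
    intro r hr
    have h2r : (0:ℝ) < 2 * r := by linarith
    have hginteg : IntegrableOn (fun s => s * k s) (Ioo (0:ℝ) (2*r)) volume := by
      refine Measure.integrableOn_of_bounded (M := 2*r*M) measure_Ioo_lt_top.ne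
        (measurable_id.mul hk_meas).aestronglyMeasurable ?_
      filter_upwards [ae_restrict_mem measurableSet_Ioo] with s hs
      rw [Real.norm_eq_abs, abs_mul, abs_of_pos hs.1, abs_of_nonneg (hk_nonneg s)]
      exact mul_le_mul hs.2.le (hk_le_M s) (hk_nonneg s) (by linarith)
    have hsub : Ioo r (2*r) ⊆ Ioo 0 (2*r) := Ioo_subset_Ioo hr.le le_rfl
    have hginteg2 : IntegrableOn (fun s => s * k s) (Ioo r (2*r)) volume :=
      hginteg.mono_set hsub
    have hlin : IntegrableOn (fun s : ℝ => s * (k r / D)) (Ioo r (2*r)) volume := by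
      refine Measure.integrableOn_of_bounded (M := 2*r*(|k r / D|)) measure_Ioo_lt_top.ne
        (measurable_id.mul measurable_const).aestronglyMeasurable ?_
      filter_upwards [ae_restrict_mem measurableSet_Ioo] with s hs
      rw [Real.norm_eq_abs, abs_mul, abs_of_pos (lt_trans hr hs.1)]
      exact mul_le_mul_of_nonneg_right hs.2.le (abs_nonneg _)
    have step1 : ∫ s in Ioo r (2*r), s * (k r / D) ≤ ∫ s in Ioo r (2*r), s * k s := by
      refine setIntegral_mono_on hlin hginteg2 measurableSet_Ioo ?_
      intro s hs
      have hks := hkmono r s hr hs.1.le hs.2.le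
      have hs0 : 0 < s := lt_trans hr hs.1
      have hdk : k r / D ≤ k s := by rw [div_le_iff₀ hD]; linarith
      exact mul_le_mul_of_nonneg_left hdk hs0.le
    have step2 : ∫ s in Ioo r (2*r), s * k s ≤ ∫ s in Ioo 0 (2*r), s * k s := by
      refine setIntegral_mono_set hginteg ?_ (HasSubset.Subset.eventuallyLE hsub)
      filter_upwards [ae_restrict_mem measurableSet_Ioo] with s hs
      exact mul_nonneg hs.1.le (hk_nonneg s)
    have step3 : ∫ s in Ioo r (2*r), s * (k r / D) = (k r / D) * (3 * r ^ 2 / 2) := by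
      rw [setIntegral_congr_set Ioo_ae_eq_Ioc,
        ← intervalIntegral.integral_of_le (by linarith : r ≤ 2*r),
        intervalIntegral.integral_mul_const, integral_id]
      ring
    have hle : (k r / D) * (3 * r ^ 2 / 2) ≤ C * Real.log (2 + 2 * r) := by
      rw [← step3]
      exact le_trans (le_trans step1 step2) (hint (2*r) h2r)
    have := mul_le_mul_of_nonneg_left hle hD.le
    calc k r * (3 * r ^ 2 / 2) = D * ((k r / D) * (3 * r ^ 2 / 2)) := by
          field_simp
      _ ≤ D * (C * Real.log (2 + 2 * r)) := this
  -- final assembly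
  intro ε hε
  obtain ⟨hε0, hε1⟩ := hε
  have h1ε : (0:ℝ) < 1 - ε := by linarith
  refine ⟨4*M + 32*D*C/(3*(1-ε)), by positivity, ?_⟩
  intro r hr
  have hP : 0 < (1+r) ^ (1+ε) := Real.rpow_pos_of_pos (by linarith) _
  rw [le_div_iff₀ hP]
  have hC2 : 0 ≤ 32*D*C/(3*(1-ε)) := by positivity
  rcases le_or_gt r 1 with hr1 | hr1
  · have hPle : (1+r) ^ (1+ε) ≤ 4 := by
      calc (1+r) ^ (1+ε) ≤ (2:ℝ) ^ (1+ε) :=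
            Real.rpow_le_rpow (by linarith) (by linarith) (by linarith)
        _ ≤ (2:ℝ) ^ (2:ℝ) :=
            Real.rpow_le_rpow_of_exponent_le (by norm_num) (by linarith)
        _ = 4 := by
            rw [show (2:ℝ)^(2:ℝ) = (2:ℝ)^((2:ℕ):ℝ) by norm_num, Real.rpow_natCast]
            norm_num
    calc k r * (1+r) ^ (1+ε) ≤ M * 4 :=
          mul_le_mul (hk_le_M r) hPle hP.le hM.le
      _ ≤ 4*M + 32*D*C/(3*(1-ε)) := by linarith
  · set A := r ^ (1-ε) with hAdef
    set B := r ^ (1+ε) with hBdef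
    have hA : 0 < A := Real.rpow_pos_of_pos hr _
    have hB : 0 < B := Real.rpow_pos_of_pos hr _
    have hAB : A * B = r ^ 2 := by
      rw [hAdef, hBdef, ← Real.rpow_add hr]
      norm_num
    have hlog : Real.log (2 + 2*r) * (1-ε) ≤ 4 * A := by
      have e1 : Real.log (2 + 2*r) * (1-ε) = Real.log ((2 + 2*r) ^ (1-ε)) := by
        rw [Real.log_rpow (by linarith)]; ring
      have e2 : Real.log ((2 + 2*r) ^ (1-ε)) ≤ (2 + 2*r) ^ (1-ε) :=
        Real.log_le_self (Real.rpow_nonneg (by linarith) _)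
      have e3 : (2 + 2*r) ^ (1-ε) ≤ (4*r) ^ (1-ε) :=
        Real.rpow_le_rpow (by linarith) (by linarith) h1ε.le
      have e4 : (4*r) ^ (1-ε) = (4:ℝ) ^ (1-ε) * A := by
        rw [hAdef, Real.mul_rpow (by norm_num) hr.le]
      have e5 : (4:ℝ) ^ (1-ε) ≤ (4:ℝ) ^ (1:ℝ) :=
        Real.rpow_le_rpow_of_exponent_le (by norm_num) (by linarith)
      have e6 : (4:ℝ) ^ (1:ℝ) = 4 := Real.rpow_one 4
      calc Real.log (2 + 2*r) * (1-ε) ≤ (4*r) ^ (1-ε) := by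
            rw [e1]; exact le_trans e2 e3
        _ = (4:ℝ) ^ (1-ε) * A := e4
        _ ≤ 4 * A := by nlinarith [e5, e6, hA]
    have hPle : (1+r) ^ (1+ε) ≤ 4 * B := by
      have e3 : (1+r) ^ (1+ε) ≤ (2*r) ^ (1+ε) :=
        Real.rpow_le_rpow (by linarith) (by linarith) (by linarith)
      have e4 : (2*r) ^ (1+ε) = (2:ℝ) ^ (1+ε) * B := by
        rw [hBdef, Real.mul_rpow (by norm_num) hr.le]
      have e5 : (2:ℝ) ^ (1+ε) ≤ (2:ℝ) ^ (2:ℝ) :=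
        Real.rpow_le_rpow_of_exponent_le (by norm_num) (by linarith)
      have e6 : (2:ℝ) ^ (2:ℝ) = 4 := by
        rw [show (2:ℝ)^(2:ℝ) = (2:ℝ)^((2:ℕ):ℝ) by norm_num, Real.rpow_natCast]
        norm_num
      calc (1+r) ^ (1+ε) ≤ (2:ℝ) ^ (1+ε) * B := by rw [← e4]; exact e3
        _ ≤ 4 * B := by nlinarith [e5, e6, hB]
    have hkeyr := hkey r hr
    set L := Real.log (2 + 2*r) with hLdef
    have h3 : k r * B * (1-ε) * A ≤ (8/3) * D * C * A := by
      have h1' : k r * (3 * r ^ 2 / 2) * (1-ε) ≤ D * (C * L) * (1-ε) :=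
        mul_le_mul_of_nonneg_right hkeyr h1ε.le
      have h2' : D * C * (L * (1-ε)) ≤ D * C * (4 * A) :=
        mul_le_mul_of_nonneg_left hlog (by positivity)
      have h1'' : k r * (3 * (A * B) / 2) * (1-ε) ≤ D * (C * L) * (1-ε) := by
        rw [hAB]; exact h1'
      nlinarith [h1'', h2']
    have h4 : k r * B * (1-ε) ≤ (8/3) * D * C :=
      le_of_mul_le_mul_right h3 hA
    have h5 : k r * (1+r) ^ (1+ε) * (3*(1-ε)) ≤ 32 * D * C := by
      nlinarith [mul_le_mul_of_nonneg_left hPle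
        (mul_nonneg (hk_nonneg r) (by linarith : (0:ℝ) ≤ 3*(1-ε))), h4]
    have h6 : k r * (1+r) ^ (1+ε) ≤ 32*D*C/(3*(1-ε)) := by
      rw [le_div_iff₀ (by positivity : (0:ℝ) < 3*(1-ε))]
      exact h5
    nlinarith [mul_nonneg hM.le (le_refl (0:ℝ)), h6, hM]
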